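/- Every derivation under the priority semantics ω_p of CHR^rp is also a derivation under the theoretical operational semantics ω_t of CHR, and every state that is a final state under ω_p (no ω_p transition applies) is also a final state under ω_t. -/
import Mathlib


/-- An abstract model of the transition system of a CHR^rp program.  A CHR^rp execution
state is abstracted to an element of `State`; `Inst` is the type of ground rule
instances (a rule together with a matching substitution).  `solve` and `introduce` are
the `Solve` and `Introduce` transitions, which are shared by the priority semantics ω_p
and the theoretical operational semantics ω_t.  `applyInst σ i σ'` expresses that the
`Apply` transition can fire the rule instance `i` in state `σ` yielding `σ'`, where all
conditions of `Apply` *except* the priority condition are required (heads matched by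
stored constraints, guard entailed, ground priority, history tuple not in the
propagation history).  `prio i` is the (numerical) priority of instance `i`; a priority
is higher when it is numerically smaller. -/
structure CHRSystem (State Inst : Type*) where
  solve : State → State → Prop
  introduce : State → State → Prop
  applyInst : State → Inst → State → Prop
  prio : Inst → ℕ

namespace CHRSystem

variable {State Inst : Type*} (sys : CHRSystem State Inst)

/-- A rule instance is applicable in a state if the `Apply` transition could fire it,
ignoring priorities. -/
def Applicable (σ : State) (i : Inst) : Prop := ∃ σ', sys.applyInst σ i σ'

/-- One transition of the theoretical operational semantics ω_t of CHR:
`Solve`, `Introduce`, or `Apply` ignoring rule priorities. -/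
def StepT (σ σ' : State) : Prop :=
  sys.solve σ σ' ∨ sys.introduce σ σ' ∨ ∃ i, sys.applyInst σ i σ'

/-- One transition of the priority semantics ω_p of CHR^rp: `Solve`, `Introduce`, or
`Apply` of a rule instance such that no applicable rule instance has a strictly
higher priority (numerically smaller priority value). -/
def StepP (σ σ' : State) : Prop :=
  sys.solve σ σ' ∨ sys.introduce σ σ' ∨
    ∃ i, sys.applyInst σ i σ' ∧ ∀ j, sys.Applicable σ j → sys.prio i ≤ sys.prio j

end CHRSystem

/-- Every derivation under the priority semantics ω_p of CHR^rp is also a derivation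
under the theoretical operational semantics ω_t of CHR, and every state that is final
under ω_p (no ω_p transition applies) is also a final state under ω_t. -/
theorem omegaP_derivations_are_omegaT_derivations_and_final_states_agree
    {State Inst : Type*} (sys : CHRSystem State Inst) :
    (∀ (L : ℕ) (f : ℕ → State),
      (∀ i < L, sys.StepP (f i) (f (i + 1))) → ∀ i < L, sys.StepT (f i) (f (i + 1))) ∧
    (∀ σ : State, (¬ ∃ σ', sys.StepP σ σ') → ¬ ∃ σ', sys.StepT σ σ') := by
  constructor
  · intro L f h i hi
    rcases h i hi with h1 | h2 | ⟨j, hj, _⟩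
    · exact Or.inl h1
    · exact Or.inr (Or.inl h2)
    · exact Or.inr (Or.inr ⟨j, hj⟩)
  · rintro σ hP ⟨σ', hT⟩
    apply hP
    rcases hT with h1 | h2 | ⟨i, hi⟩
    · exact ⟨σ', Or.inl h1⟩
    · exact ⟨σ', Or.inr (Or.inl h2)⟩
    · obtain ⟨n, ⟨j, hjapp, hjn⟩, hmin⟩ :=
        Nat.lt_wfRel.wf.has_min {n | ∃ j, sys.Applicable σ j ∧ sys.prio j = n}
          ⟨sys.prio i, i, ⟨σ', hi⟩, rfl⟩
      obtain ⟨τ, hjτ⟩ := hjapp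
      refine ⟨τ, Or.inr (Or.inr ⟨j, hjτ, fun k hk => ?_⟩)⟩
      rw [hjn]
      exact Nat.le_of_not_lt (hmin _ ⟨k, hk, rfl⟩)
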